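/- For the root system B_n with positive roots Φ⁺ = {ε_i, ε_j ± ε_i : 1 ≤ i < j ≤ n, 1 ≤ r ≤ n}, ρ = (1/2)∑_{i=1}^n (2i-1)ε_i, and weight λ_s = ∑_{i=1}^s (i-1/2)k·ε_i + ∑_{i=s+1}^n ((i+1/2)k+1)·ε_i (for 0 ≤ s ≤ n and k ∈ ℕ), the Weyl dimension product ∏_{α∈Φ⁺}(λ_s+ρ,α)/(ρ,α) equals C(2n+1, n-s)·(k+1)^{n²}. -/

import Mathlib

/-- Weyl dimension product for the root system `B_n` with positive roots
`{ε_i, ε_j ± ε_i}` and `ρ = (1/2)∑(2i-1)ε_i`, evaluated at the weight `∑ ν_i ε_i`: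
`∏_{α∈Φ⁺}(ν+ρ,α)/(ρ,α)`. -/
noncomputable def dimB (n : ℕ) (ν : ℕ → ℚ) : ℚ :=
  (∏ p ∈ (Finset.Icc 1 n ×ˢ Finset.Icc 1 n).filter (fun p => p.1 < p.2),
      (((ν p.2 + (p.2 : ℚ) - 1/2) - (ν p.1 + (p.1 : ℚ) - 1/2)) *
        ((ν p.2 + (p.2 : ℚ) - 1/2) + (ν p.1 + (p.1 : ℚ) - 1/2))) /
      ((((p.2 : ℚ) - 1/2) - ((p.1 : ℚ) - 1/2)) *
        (((p.2 : ℚ) - 1/2) + ((p.1 : ℚ) - 1/2)))) *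
  ∏ i ∈ Finset.Icc 1 n, (ν i + (i : ℚ) - 1/2) / ((i : ℚ) - 1/2)

/-- Weyl dimension product for the root system `D_n` with positive roots
`{ε_j ± ε_i : i < j}` and `ρ = ∑(i-1)ε_i`, evaluated at the weight `∑ ν_i ε_i`. -/
noncomputable def dimD (n : ℕ) (ν : ℕ → ℚ) : ℚ :=
  ∏ p ∈ (Finset.Icc 1 n ×ˢ Finset.Icc 1 n).filter (fun p => p.1 < p.2),
      (((ν p.2 + (p.2 : ℚ) - 1) - (ν p.1 + (p.1 : ℚ) - 1)) *
        ((ν p.2 + (p.2 : ℚ) - 1) + (ν p.1 + (p.1 : ℚ) - 1))) /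
      ((((p.2 : ℚ)) - (p.1 : ℚ)) * (((p.2 : ℚ) - 1) + ((p.1 : ℚ) - 1)))

lemma mySumOdd : ∀ s : ℕ, ∑ j ∈ Finset.Icc 1 s, (2 * j - 1) = s ^ 2 := by
  intro s
  induction s with
  | zero => simp
  | succ s ih =>
      rw [Finset.sum_Icc_succ_top (by omega), ih]
      have h : (s + 1) ^ 2 = s ^ 2 + (2 * s + 1) := by ring
      omega

lemma myPairProd (n : ℕ) (f : ℕ × ℕ → ℚ) :
    ∏ p ∈ (Finset.Icc 1 n ×ˢ Finset.Icc 1 n).filter (fun p => p.1 < p.2), f p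
      = ∏ j ∈ Finset.Icc 1 n, ∏ i ∈ Finset.Ico 1 j, f (i, j) := by
  apply Finset.prod_finset_product_right
  intro p
  simp only [Finset.mem_filter, Finset.mem_product, Finset.mem_Icc, Finset.mem_Ico]
  constructor
  · rintro ⟨⟨⟨h1, h2⟩, h3, h4⟩, h5⟩; exact ⟨⟨h3, h4⟩, h1, h5⟩
  · rintro ⟨⟨h3, h4⟩, h1, h5⟩; exact ⟨⟨⟨h1, le_trans (le_of_lt h5) h4⟩, h3, h4⟩, h5⟩

lemma myDimBeq (n : ℕ) (ν : ℕ → ℚ) :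
    dimB n ν = ∏ j ∈ Finset.Icc 1 n,
      ((∏ i ∈ Finset.Ico 1 j,
        ((((ν j + (j : ℚ) - 1/2) - (ν i + (i : ℚ) - 1/2)) *
          ((ν j + (j : ℚ) - 1/2) + (ν i + (i : ℚ) - 1/2))) /
        ((((j : ℚ) - 1/2) - ((i : ℚ) - 1/2)) * (((j : ℚ) - 1/2) + ((i : ℚ) - 1/2))))) *
       ((ν j + (j : ℚ) - 1/2) / ((j : ℚ) - 1/2))) := by
  rw [dimB, myPairProd n, ← Finset.prod_mul_distrib]


lemma myTeleA (c : ℕ) : ∀ s : ℕ, s ≤ c →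
    ∏ i ∈ Finset.Ico 1 (s + 1),
      ((((c : ℚ) + 2 - i) * ((c : ℚ) + 1 + i)) / ((((c : ℚ) + 1 - i)) * ((c : ℚ) + i)))
      = ((c : ℚ) + 1 + s) / ((c : ℚ) + 1 - s) := by
  intro s
  induction s with
  | zero =>
      intro _
      simp only [Nat.cast_zero, add_zero, sub_zero, zero_add, Finset.Ico_self,
        Finset.prod_empty]
      rw [div_self (by positivity)]
  | succ s ih =>
      intro h
      have hs : (s : ℚ) ≤ c := by exact_mod_cast Nat.le_of_succ_le h
      have hs1 : (s : ℚ) + 1 ≤ c := by exact_mod_cast h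
      have h1 : (c : ℚ) + 1 - s ≠ 0 := by linarith
      have h2 : (c : ℚ) - s ≠ 0 := by linarith
      have h3 : (c : ℚ) + 1 + s ≠ 0 := by positivity
      have h4 : (c : ℚ) + s + 1 ≠ 0 := by positivity
      rw [Finset.prod_Ico_succ_top (by omega), ih (by omega)]
      push_cast
      field_simp
      ring

lemma myTeleB (c a : ℕ) (ha : 1 ≤ a) : ∀ b, a ≤ b →
    ∏ i ∈ Finset.Ico a b, (((c : ℚ) + 2 + i) / ((c : ℚ) + i))
      = (((c : ℚ) + b) * ((c : ℚ) + b + 1)) / (((c : ℚ) + a) * ((c : ℚ) + a + 1)) := by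
  intro b hb
  induction b, hb using Nat.le_induction with
  | base =>
      rw [Finset.Ico_self, Finset.prod_empty, div_self (by positivity)]
  | succ b hb ih =>
      have h1 : (c : ℚ) + b ≠ 0 := by
        have : (1 : ℚ) ≤ b := by exact_mod_cast le_trans ha hb
        positivity
      have h2 : (c : ℚ) + a ≠ 0 := by
        have : (1 : ℚ) ≤ a := by exact_mod_cast ha
        positivity
      have h3 : (c : ℚ) + a + 1 ≠ 0 := by
        have : (1 : ℚ) ≤ a := by exact_mod_cast ha
        positivity
      rw [Finset.prod_Ico_succ_top hb, ih]
      push_cast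
      field_simp
      ring

lemma myStepF (n s k : ℕ) (hns : s ≤ n) :
    (∏ i ∈ Finset.Ico 1 (n + 1),
        ((((if n + 1 ≤ s then (((n+1 : ℕ) : ℚ) - 1/2) * k else (((n+1 : ℕ) : ℚ) + 1/2) * k + 1)
            + ((n+1 : ℕ) : ℚ) - 1/2)
          - ((if i ≤ s then ((i : ℚ) - 1/2) * k else ((i : ℚ) + 1/2) * k + 1) + (i : ℚ) - 1/2)) *
         (((if n + 1 ≤ s then (((n+1 : ℕ) : ℚ) - 1/2) * k else (((n+1 : ℕ) : ℚ) + 1/2) * k + 1)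
            + ((n+1 : ℕ) : ℚ) - 1/2)
          + ((if i ≤ s then ((i : ℚ) - 1/2) * k else ((i : ℚ) + 1/2) * k + 1) + (i : ℚ) - 1/2))) /
        (((((n+1 : ℕ) : ℚ) - 1/2) - ((i : ℚ) - 1/2)) * ((((n+1 : ℕ) : ℚ) - 1/2) + ((i : ℚ) - 1/2)))) *
      (((if n + 1 ≤ s then (((n+1 : ℕ) : ℚ) - 1/2) * k else (((n+1 : ℕ) : ℚ) + 1/2) * k + 1)
          + ((n+1 : ℕ) : ℚ) - 1/2) / (((n+1 : ℕ) : ℚ) - 1/2))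
    = ((k : ℚ) + 1) ^ (2 * n + 1) *
        ((2 * (n : ℚ) + 2) * (2 * (n : ℚ) + 3) / (((n : ℚ) + 1 - s) * ((n : ℚ) + s + 2))) := by
  have hntop : ¬ (n + 1 ≤ s) := by omega
  simp only [if_neg hntop]
  rw [← Finset.prod_Ico_consecutive _ (show 1 ≤ s + 1 by omega) (show s + 1 ≤ n + 1 by omega)]
  have hA : ∀ i ∈ Finset.Ico 1 (s + 1),
      ((((((n+1 : ℕ) : ℚ) + 1/2) * k + 1 + ((n+1 : ℕ) : ℚ) - 1/2)
          - ((if i ≤ s then ((i : ℚ) - 1/2) * k else ((i : ℚ) + 1/2) * k + 1) + (i : ℚ) - 1/2)) *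
       ((((n+1 : ℕ) : ℚ) + 1/2) * k + 1 + ((n+1 : ℕ) : ℚ) - 1/2
          + ((if i ≤ s then ((i : ℚ) - 1/2) * k else ((i : ℚ) + 1/2) * k + 1) + (i : ℚ) - 1/2))) /
        (((((n+1 : ℕ) : ℚ) - 1/2) - ((i : ℚ) - 1/2)) * ((((n+1 : ℕ) : ℚ) - 1/2) + ((i : ℚ) - 1/2)))
      = ((k : ℚ) + 1) ^ 2 *
          ((((n : ℚ) + 2 - i) * ((n : ℚ) + 1 + i)) / ((((n : ℚ) + 1 - i)) * ((n : ℚ) + i))) := by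
    intro i hi
    rw [Finset.mem_Ico] at hi
    have his : i ≤ s := by omega
    have hiq1 : (1 : ℚ) ≤ (i : ℚ) := by exact_mod_cast hi.1
    have hiqn : (i : ℚ) ≤ (n : ℚ) := by exact_mod_cast le_trans his hns
    rw [if_pos his]
    have hD : ((((n+1 : ℕ) : ℚ) - 1/2) - ((i : ℚ) - 1/2)) *
        ((((n+1 : ℕ) : ℚ) - 1/2) + ((i : ℚ) - 1/2)) ≠ 0 := by
      push_cast
      exact mul_ne_zero (by linarith) (by linarith)
    have hE : (((n : ℚ) + 1 - i)) * ((n : ℚ) + i) ≠ 0 :=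
      mul_ne_zero (by linarith) (by linarith)
    rw [← mul_div_assoc, div_eq_div_iff hD hE]
    push_cast
    ring
  have hB : ∀ i ∈ Finset.Ico (s + 1) (n + 1),
      ((((((n+1 : ℕ) : ℚ) + 1/2) * k + 1 + ((n+1 : ℕ) : ℚ) - 1/2)
          - ((if i ≤ s then ((i : ℚ) - 1/2) * k else ((i : ℚ) + 1/2) * k + 1) + (i : ℚ) - 1/2)) *
       ((((n+1 : ℕ) : ℚ) + 1/2) * k + 1 + ((n+1 : ℕ) : ℚ) - 1/2
          + ((if i ≤ s then ((i : ℚ) - 1/2) * k else ((i : ℚ) + 1/2) * k + 1) + (i : ℚ) - 1/2))) /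
        (((((n+1 : ℕ) : ℚ) - 1/2) - ((i : ℚ) - 1/2)) * ((((n+1 : ℕ) : ℚ) - 1/2) + ((i : ℚ) - 1/2)))
      = ((k : ℚ) + 1) ^ 2 * (((n : ℚ) + 2 + i) / ((n : ℚ) + i)) := by
    intro i hi
    rw [Finset.mem_Ico] at hi
    have his : ¬ (i ≤ s) := by omega
    have hiq1 : (1 : ℚ) ≤ (i : ℚ) := by exact_mod_cast le_trans (by omega : 1 ≤ s + 1) hi.1
    have hiqn : (i : ℚ) ≤ (n : ℚ) := by exact_mod_cast (by omega : i ≤ n)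
    rw [if_neg his]
    have hD : ((((n+1 : ℕ) : ℚ) - 1/2) - ((i : ℚ) - 1/2)) *
        ((((n+1 : ℕ) : ℚ) - 1/2) + ((i : ℚ) - 1/2)) ≠ 0 := by
      push_cast
      exact mul_ne_zero (by linarith) (by linarith)
    have hE : ((n : ℚ) + i) ≠ 0 := by linarith
    rw [← mul_div_assoc, div_eq_div_iff hD hE]
    push_cast
    ring
  rw [Finset.prod_congr rfl hA, Finset.prod_congr rfl hB,
    Finset.prod_mul_distrib, Finset.prod_mul_distrib,
    Finset.prod_const, Finset.prod_const, Nat.card_Ico, Nat.card_Ico,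
    myTeleA n s hns, myTeleB n (s + 1) (by omega) (n + 1) (by omega)]
  have hS : ((((n+1 : ℕ) : ℚ) + 1/2) * k + 1 + ((n+1 : ℕ) : ℚ) - 1/2) / (((n+1 : ℕ) : ℚ) - 1/2)
      = ((k : ℚ) + 1) * ((2 * (n : ℚ) + 3) / (2 * (n : ℚ) + 1)) := by
    have hD : (((n+1 : ℕ) : ℚ) - 1/2) ≠ 0 := by push_cast; linarith [Nat.cast_nonneg (α := ℚ) n]
    have hE : (2 * (n : ℚ) + 1) ≠ 0 := by positivity
    rw [← mul_div_assoc, div_eq_div_iff hD hE]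
    push_cast
    ring
  have hsq : (s : ℚ) ≤ (n : ℚ) := by exact_mod_cast hns
  have h1 : (n : ℚ) + 1 - s ≠ 0 := by linarith
  have h2 : (n : ℚ) + s + 1 ≠ 0 := by positivity
  have h3 : (n : ℚ) + s + 2 ≠ 0 := by positivity
  have h4 : 2 * (n : ℚ) + 1 ≠ 0 := by positivity
  have hkpow : (((k : ℚ) + 1) ^ 2) ^ s * (((k : ℚ) + 1) ^ 2) ^ (n - s) * ((k : ℚ) + 1)
      = ((k : ℚ) + 1) ^ (2 * n + 1) := by
    rw [← pow_mul, ← pow_mul, ← pow_add, ← pow_succ]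
    congr 1
    omega
  have key : (((n : ℚ) + 1 + s) / ((n : ℚ) + 1 - s)) *
        ((((n : ℚ) + ((n+1 : ℕ) : ℚ)) * ((n : ℚ) + ((n+1 : ℕ) : ℚ) + 1)) /
          (((n : ℚ) + ((s+1 : ℕ) : ℚ)) * ((n : ℚ) + ((s+1 : ℕ) : ℚ) + 1))) *
        ((2 * (n : ℚ) + 3) / (2 * (n : ℚ) + 1))
      = (2 * (n : ℚ) + 2) * (2 * (n : ℚ) + 3) / (((n : ℚ) + 1 - s) * ((n : ℚ) + s + 2)) := by
    push_cast
    field_simp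
    ring
  rw [hS, show s + 1 - 1 = s from by omega, show n + 1 - (s + 1) = n - s from by omega,
    ← hkpow, ← key]
  ring

/-- For `B_n`, the weight `λ_s = ∑_{i≤s}(i-1/2)k ε_i + ∑_{i>s}((i+1/2)k+1) ε_i`
has Weyl dimension product `C(2n+1, n-s)(k+1)^{n²}`. -/
theorem weyl_dim_Bn_steinberg_intermediate (n s k : ℕ) (hs : s ≤ n) :
    dimB n (fun i => if i ≤ s then ((i : ℚ) - 1/2) * k else ((i : ℚ) + 1/2) * k + 1) =
      (Nat.choose (2 * n + 1) (n - s) : ℚ) * ((k : ℚ) + 1) ^ (n ^ 2) := by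
  induction n, hs using Nat.le_induction with
  | base =>
      simp only [myDimBeq]
      rw [Nat.sub_self, Nat.choose_zero_right, Nat.cast_one, one_mul]
      have hfac : ∀ j ∈ Finset.Icc 1 s,
          ((∏ i ∈ Finset.Ico 1 j,
            ((((if j ≤ s then ((j : ℚ) - 1/2) * k else ((j : ℚ) + 1/2) * k + 1) + (j : ℚ) - 1/2)
              - ((if i ≤ s then ((i : ℚ) - 1/2) * k else ((i : ℚ) + 1/2) * k + 1) + (i : ℚ) - 1/2)) *
             (((if j ≤ s then ((j : ℚ) - 1/2) * k else ((j : ℚ) + 1/2) * k + 1) + (j : ℚ) - 1/2)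
              + ((if i ≤ s then ((i : ℚ) - 1/2) * k else ((i : ℚ) + 1/2) * k + 1) + (i : ℚ) - 1/2))) /
            ((((j : ℚ) - 1/2) - ((i : ℚ) - 1/2)) * (((j : ℚ) - 1/2) + ((i : ℚ) - 1/2)))) *
           (((if j ≤ s then ((j : ℚ) - 1/2) * k else ((j : ℚ) + 1/2) * k + 1) + (j : ℚ) - 1/2)
              / ((j : ℚ) - 1/2)))
          = ((k : ℚ) + 1) ^ (2 * j - 1) := by
        intro j hj
        rw [Finset.mem_Icc] at hj
        rw [if_pos hj.2]
        have hjq : (1 : ℚ) ≤ (j : ℚ) := by exact_mod_cast hj.1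
        have hpair : ∀ i ∈ Finset.Ico 1 j,
            ((((j : ℚ) - 1/2) * k + (j : ℚ) - 1/2
              - ((if i ≤ s then ((i : ℚ) - 1/2) * k else ((i : ℚ) + 1/2) * k + 1) + (i : ℚ) - 1/2)) *
             (((j : ℚ) - 1/2) * k + (j : ℚ) - 1/2
              + ((if i ≤ s then ((i : ℚ) - 1/2) * k else ((i : ℚ) + 1/2) * k + 1) + (i : ℚ) - 1/2))) /
            ((((j : ℚ) - 1/2) - ((i : ℚ) - 1/2)) * (((j : ℚ) - 1/2) + ((i : ℚ) - 1/2)))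
            = ((k : ℚ) + 1) ^ 2 := by
          intro i hi
          rw [Finset.mem_Ico] at hi
          have his : i ≤ s := by omega
          rw [if_pos his]
          have hiq : (1 : ℚ) ≤ (i : ℚ) := by exact_mod_cast hi.1
          have hij : (i : ℚ) < (j : ℚ) := by exact_mod_cast hi.2
          have hD : (((j : ℚ) - 1/2) - ((i : ℚ) - 1/2)) * (((j : ℚ) - 1/2) + ((i : ℚ) - 1/2)) ≠ 0 :=
            mul_ne_zero (by linarith) (by linarith)
          rw [div_eq_iff hD]
          ring
        rw [Finset.prod_congr rfl hpair, Finset.prod_const, Nat.card_Ico]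
        have hsingle : (((j : ℚ) - 1/2) * k + (j : ℚ) - 1/2) / ((j : ℚ) - 1/2) = (k : ℚ) + 1 := by
          rw [div_eq_iff (by linarith : ((j : ℚ) - 1/2) ≠ 0)]
          ring
        rw [hsingle, ← pow_mul, ← pow_succ]
        congr 1
        omega
      rw [Finset.prod_congr rfl hfac, Finset.prod_pow_eq_pow_sum, mySumOdd]
  | succ n hns ih =>
      simp only [myDimBeq] at ih ⊢
      rw [Finset.prod_Icc_succ_top (by omega : 1 ≤ n + 1), ih, myStepF n s k hns]
      have hsq : (s : ℚ) ≤ (n : ℚ) := by exact_mod_cast hns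
      have h1 : (n : ℚ) + 1 - s ≠ 0 := by linarith
      have h3 : (n : ℚ) + s + 2 ≠ 0 := by positivity
      have f1 : (((2 * n + 1).factorial : ℕ) : ℚ) ≠ 0 :=
        Nat.cast_ne_zero.mpr (Nat.factorial_ne_zero _)
      have f2 : (((n - s).factorial : ℕ) : ℚ) ≠ 0 :=
        Nat.cast_ne_zero.mpr (Nat.factorial_ne_zero _)
      have f3 : (((n + s + 1).factorial : ℕ) : ℚ) ≠ 0 :=
        Nat.cast_ne_zero.mpr (Nat.factorial_ne_zero _)
      have hC2 : ((Nat.choose (2 * (n + 1) + 1) (n + 1 - s) : ℕ) : ℚ)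
          = (Nat.choose (2 * n + 1) (n - s) : ℚ) *
            ((2 * (n : ℚ) + 2) * (2 * (n : ℚ) + 3) / (((n : ℚ) + 1 - s) * ((n : ℚ) + s + 2))) := by
        rw [Nat.cast_choose ℚ (show n + 1 - s ≤ 2 * (n + 1) + 1 by omega),
          Nat.cast_choose ℚ (show n - s ≤ 2 * n + 1 by omega),
          show 2 * (n + 1) + 1 - (n + 1 - s) = n + s + 2 from by omega,
          show 2 * n + 1 - (n - s) = n + s + 1 from by omega,
          show 2 * (n + 1) + 1 = 2 * n + 3 from by omega,
          show (2 * n + 3).factorial = (2 * n + 3) * ((2 * n + 2) * (2 * n + 1).factorial) from by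
            rw [show 2 * n + 3 = (2 * n + 2) + 1 from rfl, Nat.factorial_succ,
              show 2 * n + 2 = (2 * n + 1) + 1 from rfl, Nat.factorial_succ],
          show (n + 1 - s).factorial = (n + 1 - s) * (n - s).factorial from by
            rw [show n + 1 - s = (n - s) + 1 from by omega, Nat.factorial_succ],
          show (n + s + 2).factorial = (n + s + 2) * (n + s + 1).factorial from
            Nat.factorial_succ _]
        push_cast [Nat.cast_sub (show s ≤ n + 1 by omega), Nat.cast_sub hns]
        field_simp
      have hpow2 : ((k : ℚ) + 1) ^ ((n + 1) ^ 2)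
          = ((k : ℚ) + 1) ^ (n ^ 2) * ((k : ℚ) + 1) ^ (2 * n + 1) := by
        rw [← pow_add]
        congr 1
        ring
      rw [hC2, hpow2]
      field_simp
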